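/- arXiv:1505.04163 — 2 statements merged into one kernel-verified Lean document; each statement's English description precedes it below -/
import Mathlib

section
/- There exists a 10×10 integer matrix S with |det S| = 30 such that Sᵀ · G(U⊕E_8) · S = G(A_5) ⊕ G(A_4) ⊕ ⟨30⟩. In other words, the lattice A_5 ⊕ A_4 ⊕ ⟨30⟩ embeds as a sublattice of index 30 in the even unimodular lattice U ⊕ E_8 of signature (1,9); i.e., A_5 ⊕ A_4 and a vector h of square 30 glue to U ⊕ E_8. -/
/-- The Gram matrix of the negative-definite root lattice `Aₙ` (0-based indexing:
`i : Fin n` is the vertex `a_{i+1}`): diagonal entries `-2`, entries `1` at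
adjacent positions, `0` elsewhere. -/
def gramA (n : ℕ) : Matrix (Fin n) (Fin n) ℤ :=
  Matrix.of fun i j =>
    if i = j then -2
    else if i.val + 1 = j.val ∨ j.val + 1 = i.val then 1
    else 0

/-- The Gram matrix of the negative-definite root lattice `D_k` (0-based indexing:
`i : Fin k` is the vertex `d_{i+1}`): diagonal entries `-2`, entries `1` at the
edges `{i, i+1}` (1-based, `1 ≤ i ≤ k-2`) and `{k-2, k}` (1-based), `0` elsewhere. -/
def gramD (k : ℕ) : Matrix (Fin k) (Fin k) ℤ :=
  Matrix.of fun i j =>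
    if i = j then -2
    else if (i.val + 1 = j.val ∧ j.val + 1 ≤ k - 1) ∨ (j.val + 1 = i.val ∧ i.val + 1 ≤ k - 1) ∨
        (i.val = k - 3 ∧ j.val = k - 1) ∨ (j.val = k - 3 ∧ i.val = k - 1) then 1
    else 0

/-- The Gram matrix of the negative-definite root lattice `E_l`, `l ∈ {6,7,8}`
(0-based indexing: `i : Fin l` is the vertex `e_{i+1}`): diagonal entries `-2`,
entries `1` at the edges `{i, i+1}` (1-based, `2 ≤ i ≤ l-1`) and `{1, 4}`
(1-based), `0` elsewhere. -/
def gramE (l : ℕ) : Matrix (Fin l) (Fin l) ℤ :=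
  Matrix.of fun i j =>
    if i = j then -2
    else if (i.val + 1 = j.val ∧ 1 ≤ i.val) ∨ (j.val + 1 = i.val ∧ 1 ≤ j.val) ∨
        (i.val = 0 ∧ j.val = 3) ∨ (j.val = 0 ∧ i.val = 3) then 1
    else 0

/-- Block-diagonal (orthogonal) sum of two Gram matrices. -/
def blockSum {m n : ℕ} (A : Matrix (Fin m) (Fin m) ℤ) (B : Matrix (Fin n) (Fin n) ℤ) :
    Matrix (Fin (m + n)) (Fin (m + n)) ℤ :=
  Matrix.reindex finSumFinEquiv finSumFinEquiv (Matrix.fromBlocks A 0 0 B)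

/-- The Gram matrix of the hyperbolic plane `U`. -/
def gramU : Matrix (Fin 2) (Fin 2) ℤ := !![0, 1; 1, 0]

/-- The Gram matrix of the even unimodular lattice `U ⊕ E₈` of signature `(1,9)`. -/
def gramUE8 : Matrix (Fin 10) (Fin 10) ℤ := blockSum gramU (gramE 8)

def Smat : Matrix (Fin 10) (Fin 10) ℤ :=
  !![0, 0, 0, 0, 0, -1, 0, 1, -1, 6;
    0, 0, 0, 0, 0, 1, -1, 1, -1, 6;
    0, 0, 0, -1, 0, 0, -1, -1, -1, 2;
    0, 0, 0, 0, 0, 0, -1, -1, 0, 0;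
    0, 0, 0, 0, -1, 0, -1, -2, -1, 1;
    0, 0, -1, 0, -1, 0, -2, -2, -2, 4;
    0, -1, 0, 0, -1, 0, -2, -1, -2, 5;
    -1, 0, 0, 0, -1, 0, -2, 0, -2, 6;
    0, 0, 0, 0, -1, 0, -2, 1, -2, 7;
    0, 0, 0, 0, 0, 0, -1, 1, -2, 6]

def Lmat : Matrix (Fin 10) (Fin 10) ℤ :=
  !![0, 0, 0, 0, 0, 0, 0, 1, 0, 0;
    0, 0, 0, 0, 0, 0, 1, 0, 0, 0;
    0, 0, 0, 0, 0, 1, 0, 0, 0, 0;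
    0, 0, -1, 0, 0, 0, 0, 0, 0, 0;
    0, 0, 0, 0, 0, 0, 0, 0, 1, 0;
    -1, 0, 0, 0, 0, 0, 0, 0, 0, 0;
    0, 0, 0, 0, 0, 0, 0, 0, 0, 1;
    -1, -1, 0, 0, 0, 0, 0, 0, 0, 1;
    2, 2, 0, 0, 1, 0, 0, 0, -1, -1;
    -6, -6, 0, -1, -2, 0, 0, 0, 2, 5]

def Lmat' : Matrix (Fin 10) (Fin 10) ℤ :=
  !![0, 0, 0, 0, 0, -1, 0, 0, 0, 0;
    0, 0, 0, 0, 0, 1, 1, -1, 0, 0;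
    0, 0, 0, -1, 0, 0, 0, 0, 0, 0;
    0, 0, 0, 0, 0, 0, 1, 2, -2, -1;
    0, 0, 0, 0, 1, 0, -1, 2, 1, 0;
    0, 0, 1, 0, 0, 0, 0, 0, 0, 0;
    0, 1, 0, 0, 0, 0, 0, 0, 0, 0;
    1, 0, 0, 0, 0, 0, 0, 0, 0, 0;
    0, 0, 0, 0, 1, 0, 0, 0, 0, 0;
    0, 0, 0, 0, 0, 0, 1, 0, 0, 0]

def Hmat : Matrix (Fin 10) (Fin 10) ℤ :=
  !![-1, 0, 0, 0, -1, 0, -2, 0, -2, 6;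
    0, -1, 0, 0, -1, 0, -2, -1, -2, 5;
    0, 0, -1, 0, -1, 0, -2, -2, -2, 4;
    0, 0, 0, 1, 0, 0, 1, 1, 1, -2;
    0, 0, 0, 0, -1, 0, -2, 1, -2, 7;
    0, 0, 0, 0, 0, 1, 0, -1, 1, -6;
    0, 0, 0, 0, 0, 0, -1, 1, -2, 6;
    0, 0, 0, 0, 0, 0, 0, -1, 0, -6;
    0, 0, 0, 0, 0, 0, 0, 0, -1, 12;
    0, 0, 0, 0, 0, 0, 0, 0, 0, -30]

lemma Hmat_triangular : Matrix.BlockTriangular Hmat id := by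
  intro i j h
  exact (by decide : ∀ i j : Fin 10, j < i → (show Fin 10 → Fin 10 → ℤ from Hmat) i j = 0) i j h

lemma Hmat_det : Hmat.det = 30 := by
  rw [Matrix.det_of_upperTriangular Hmat_triangular]
  decide

lemma LL : Lmat * Lmat' = 1 := by decide

lemma LS : Lmat * Smat = Hmat := by decide

lemma abs_det_L : |Lmat.det| = 1 := by
  rcases Int.isUnit_iff.mp (Matrix.isUnit_det_of_right_inverse LL) with h1 | h1 <;>
    rw [h1] <;> norm_num

lemma abs_det_S : |Smat.det| = 30 := by
  have h : Lmat.det * Smat.det = Hmat.det :=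
    (Matrix.det_mul Lmat Smat).symm.trans (congrArg Matrix.det LS)
  rw [Hmat_det] at h
  have h2 := congrArg abs h
  rw [abs_mul, abs_det_L, one_mul] at h2
  simpa using h2

/-- The lattice `A₅ ⊕ A₄ ⊕ ⟨30⟩` embeds with index `30` into `U ⊕ E₈`: `A₅ ⊕ A₄` and a vector of square `30` glue to `U ⊕ E₈`. -/
theorem glue_12 :
    ∃ S : Matrix (Fin 10) (Fin 10) ℤ,
      |S.det| = 30 ∧ S.transpose * gramUE8 * S = blockSum (blockSum (gramA 5) (gramA 4)) !![(30 : ℤ)] := by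
  refine ⟨Smat, abs_det_S, ?_⟩
  decide
end

section
/- Let K = ℚ(t) be the field of rational functions in one variable over ℚ, and let E be the elliptic curve over K given by the Weierstrass equation y² = x³ + ((1−t)²/4 − t)x² + (t(t−1)/2)x + t²/4, i.e. y² = x³ − tx² + ((1−t)x − t)²/4 (the extremal rational elliptic surface X_{5511}). Then the point P = (0, t/2) lies on E and has exact order 5 in the group of K-points: 5·P = O and P ≠ O, where O is the point at infinity. -/
open WeierstrassCurve

noncomputable instance : CharZero (RatFunc ℚ) :=
  charZero_of_injective_algebraMap (algebraMap ℚ (RatFunc ℚ)).injective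

/-- The extremal rational elliptic surface `X₅₅₁₁`, given as the elliptic curve
`y² = x³ - tx² + ((1 - t)x - t)²/4`, i.e.
`y² = x³ + ((1 - t)²/4 - t)x² + (t(t - 1)/2)x + t²/4`, over `K = ℚ(t)`. -/
noncomputable def X5511 : WeierstrassCurve.Affine (RatFunc ℚ) :=
  { a₁ := 0
    a₂ := (1 - RatFunc.X) ^ 2 / 4 - RatFunc.X
    a₃ := 0
    a₄ := RatFunc.X * (RatFunc.X - 1) / 2
    a₆ := RatFunc.X ^ 2 / 4 }

private lemma some_congr {F : Type*} [Field F] {W : WeierstrassCurve.Affine F}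
    {x₁ y₁ x₂ y₂ : F} (h₁ : W.Nonsingular x₁ y₁) (h₂ : W.Nonsingular x₂ y₂)
    (hx : x₁ = x₂) (hy : y₁ = y₂) : Affine.Point.some _ _ h₁ = Affine.Point.some _ _ h₂ := by
  subst hx; subst hy; rfl

private lemma ht0 : (RatFunc.X : RatFunc ℚ) ≠ 0 := RatFunc.X_ne_zero

noncomputable abbrev t : RatFunc ℚ := RatFunc.X

private lemma eqP : X5511.Equation 0 (t / 2) := by
  rw [Affine.equation_iff]; simp [X5511]; ring

private lemma eqQ : X5511.Equation t (-(t ^ 2) / 2) := by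
  rw [Affine.equation_iff]; simp only [X5511]; ring

private lemma eqR : X5511.Equation t (t ^ 2 / 2) := by
  rw [Affine.equation_iff]; simp only [X5511]; ring

private lemma nsP : X5511.Nonsingular 0 (t / 2) := by
  rw [Affine.nonsingular_iff]
  refine ⟨eqP, Or.inr ?_⟩
  simp only [X5511]
  intro h
  exact ht0 (by linear_combination h)

private lemma nsQ : X5511.Nonsingular t (-(t ^ 2) / 2) := by
  rw [Affine.nonsingular_iff]
  refine ⟨eqQ, Or.inr ?_⟩
  simp only [X5511]
  intro h
  exact pow_ne_zero 2 ht0 (by linear_combination -h)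

private lemma nsR : X5511.Nonsingular t (t ^ 2 / 2) := by
  rw [Affine.nonsingular_iff]
  refine ⟨eqR, Or.inr ?_⟩
  simp only [X5511]
  intro h
  exact pow_ne_zero 2 ht0 (by linear_combination h)

private lemma hyP : t / 2 ≠ X5511.negY 0 (t / 2) := by
  simp only [Affine.negY, X5511]
  intro h
  exact ht0 (by linear_combination h)

open Classical in
private lemma slopePP : X5511.slope 0 0 (t / 2) (t / 2) = (t - 1) / 2 := by
  rw [Affine.slope_of_Y_ne rfl hyP]
  simp only [X5511, Affine.negY]
  rw [div_eq_div_iff (by intro h; exact ht0 (by linear_combination h)) two_ne_zero]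
  ring

open Classical in
private lemma doubleP : Affine.Point.some _ _ nsP + Affine.Point.some _ _ nsP = Affine.Point.some _ _ nsQ := by
  rw [Affine.Point.add_self_of_Y_ne hyP]
  refine some_congr _ _ ?_ ?_
  · rw [slopePP]; simp only [Affine.addX, X5511]; ring
  · rw [Affine.addY, Affine.negAddY, slopePP]
    simp only [Affine.addX, Affine.negY, X5511]; ring

private lemma hxQP : t ≠ (0 : RatFunc ℚ) := ht0

open Classical in
private lemma addQP : Affine.Point.some _ _ nsQ + Affine.Point.some _ _ nsP = Affine.Point.some _ _ nsR := by
  rw [Affine.Point.add_of_X_ne hxQP]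
  have hs : X5511.slope t 0 (-(t ^ 2) / 2) (t / 2) = -(t + 1) / 2 := by
    rw [Affine.slope_of_X_ne hxQP]
    rw [div_eq_div_iff (by simpa using ht0) two_ne_zero]
    ring
  refine some_congr _ _ ?_ ?_
  · rw [hs]; simp only [Affine.addX, X5511]; ring
  · rw [Affine.addY, Affine.negAddY, hs]
    simp only [Affine.addX, Affine.negY, X5511]; ring

open Classical in
private lemma addQR : Affine.Point.some _ _ nsQ + Affine.Point.some _ _ nsR = 0 := by
  refine Affine.Point.add_of_Y_eq rfl ?_
  simp only [Affine.negY, X5511]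
  ring

open Classical in
/-- The point `P = (0, t/2)` lies on `X₅₅₁₁` and has exact order `5` in the
Mordell–Weil group: `5 • P = O` and `P ≠ O`. -/
theorem X5511_point_order_five :
    X5511.Equation 0 (RatFunc.X / 2) ∧
    ∃ hP : X5511.Nonsingular 0 (RatFunc.X / 2),
      5 • Affine.Point.some _ _ hP = 0 ∧
      Affine.Point.some _ _ hP ≠ 0 := by
  refine ⟨eqP, nsP, ?_, fun h => by simp at h⟩
  have e5 : 5 • Affine.Point.some _ _ nsP =
      (Affine.Point.some _ _ nsP + Affine.Point.some _ _ nsP) +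
        ((Affine.Point.some _ _ nsP + Affine.Point.some _ _ nsP) + Affine.Point.some _ _ nsP) := by
    abel
  rw [e5, doubleP, addQP, addQR]
end
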